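/- Uniqueness of the equilibrium of the two-level model: if η₁, η₂ are positive semidefinite 2×2 complex matrices with Tr(η₁) + Tr(η₂) = 1 and 𝒦₁(η₁,η₂) = 0 and 𝒦₂(η₁,η₂) = 0, then η₁ = p(z₁⁺P₊ + z₁⁻P₋) and η₂ = (1−p)(z₂⁺P₊ + z₂⁻P₋). -/

import Mathlib

open Matrix
open scoped ComplexOrder

noncomputable section TwoLevel

def σm : Matrix (Fin 2) (Fin 2) ℂ := !![0, 0; 1, 0]
def σp : Matrix (Fin 2) (Fin 2) ℂ := !![0, 1; 0, 0]
def σz : Matrix (Fin 2) (Fin 2) ℂ := !![1, 0; 0, -1]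
def Pp : Matrix (Fin 2) (Fin 2) ℂ := !![1, 0; 0, 0]
def Pm : Matrix (Fin 2) (Fin 2) ℂ := !![0, 0; 0, 1]

/-- `𝒦₁` of the two-level model. -/
def K1 (γ₀ γ₁ γ₂ κ ω₁ : ℝ) (η₁ η₂ : Matrix (Fin 2) (Fin 2) ℂ) :
    Matrix (Fin 2) (Fin 2) ℂ :=
  (γ₀ : ℂ) • (σm * η₁ * σp - (1/2 : ℂ) • (Pp * η₁ + η₁ * Pp))
    + (γ₂ : ℂ) • (σp * η₂ * σm)
    - ((γ₁ : ℂ)/2) • (Pp * η₁ + η₁ * Pp)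
    - ((γ₀ : ℂ) * (κ : ℂ)) • η₁
    - (Complex.I * (ω₁ : ℂ) / 2) • (σz * η₁ - η₁ * σz)

/-- `𝒦₂` of the two-level model. -/
def K2 (γ₀ γ₁ γ₂ κ ω₂ : ℝ) (η₁ η₂ : Matrix (Fin 2) (Fin 2) ℂ) :
    Matrix (Fin 2) (Fin 2) ℂ :=
  (γ₀ : ℂ) • (σm * η₂ * σp - (1/2 : ℂ) • (Pp * η₂ + η₂ * Pp))
    + (γ₁ : ℂ) • (σm * η₁ * σp)
    - ((γ₂ : ℂ)/2) • (Pm * η₂ + η₂ * Pm)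
    + ((γ₀ : ℂ) * (κ : ℂ)) • η₁
    - (Complex.I * (ω₂ : ℂ) / 2) • (σz * η₂ - η₂ * σz)

/-- `κ₂ = γ₂κ/(γ₁+γ₀(1+κ))`. -/
def κ₂ (γ₀ γ₁ γ₂ κ : ℝ) : ℝ := γ₂ * κ / (γ₁ + γ₀ * (1 + κ))

/-- `z₁⁺ = κ₁/(1+κ₁)` with `κ₁ = κ`. -/
def z1p (κ : ℝ) : ℝ := κ / (1 + κ)

/-- `z₂⁺ = κ₂/(1+κ₂)`. -/
def z2p (γ₀ γ₁ γ₂ κ : ℝ) : ℝ := κ₂ γ₀ γ₁ γ₂ κ / (1 + κ₂ γ₀ γ₁ γ₂ κ)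

/-- `p = γ₂(1+κ)/(γ₂ + κ(γ₀+γ₁+γ₂) + κ²(γ₀+γ₂))`. -/
def peq (γ₀ γ₁ γ₂ κ : ℝ) : ℝ :=
  γ₂ * (1 + κ) / (γ₂ + κ * (γ₀ + γ₁ + γ₂) + κ ^ 2 * (γ₀ + γ₂))

/-- `η₁(∞) = p(z₁⁺P₊ + z₁⁻P₋)`. -/
def η1eq (γ₀ γ₁ γ₂ κ : ℝ) : Matrix (Fin 2) (Fin 2) ℂ :=
  (peq γ₀ γ₁ γ₂ κ : ℂ) • ((z1p κ : ℂ) • Pp + ((1 - z1p κ : ℝ) : ℂ) • Pm)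

/-- `η₂(∞) = (1−p)(z₂⁺P₊ + z₂⁻P₋)`. -/
def η2eq (γ₀ γ₁ γ₂ κ : ℝ) : Matrix (Fin 2) (Fin 2) ℂ :=
  ((1 - peq γ₀ γ₁ γ₂ κ : ℝ) : ℂ) •
    ((z2p γ₀ γ₁ γ₂ κ : ℂ) • Pp + ((1 - z2p γ₀ γ₁ γ₂ κ : ℝ) : ℂ) • Pm)

end TwoLevel

set_option maxHeartbeats 1000000
/-- Uniqueness of the equilibrium of the two-level model: any pair of positive semidefinite
matrices with total trace `1` annihilated by `𝒦₁` and `𝒦₂` equals `(η₁(∞), η₂(∞))`. -/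
theorem two_level_equilibrium_unique (γ₀ γ₁ γ₂ κ ω₁ ω₂ : ℝ)
    (hγ₀ : 0 < γ₀) (hγ₁ : 0 < γ₁) (hγ₂ : 0 < γ₂) (hκ : 0 < κ)
    (η₁ η₂ : Matrix (Fin 2) (Fin 2) ℂ)
    (h₁ : η₁.PosSemidef) (h₂ : η₂.PosSemidef)
    (htr : η₁.trace + η₂.trace = 1)
    (heq₁ : K1 γ₀ γ₁ γ₂ κ ω₁ η₁ η₂ = 0)
    (heq₂ : K2 γ₀ γ₁ γ₂ κ ω₂ η₁ η₂ = 0) :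
    η₁ = η1eq γ₀ γ₁ γ₂ κ ∧ η₂ = η2eq γ₀ γ₁ γ₂ κ := by
  have hγ₀' : (γ₀:ℂ) ≠ 0 := by exact_mod_cast hγ₀.ne'
  have hγ₂' : (γ₂:ℂ) ≠ 0 := by exact_mod_cast hγ₂.ne'
  have e00 : K1 γ₀ γ₁ γ₂ κ ω₁ η₁ η₂ 0 0 = 0 := congrFun (congrFun heq₁ _) _
  have e01 : K1 γ₀ γ₁ γ₂ κ ω₁ η₁ η₂ 0 1 = 0 := congrFun (congrFun heq₁ _) _
  have e10 : K1 γ₀ γ₁ γ₂ κ ω₁ η₁ η₂ 1 0 = 0 := congrFun (congrFun heq₁ _) _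
  have e11 : K1 γ₀ γ₁ γ₂ κ ω₁ η₁ η₂ 1 1 = 0 := congrFun (congrFun heq₁ _) _
  have f00 : K2 γ₀ γ₁ γ₂ κ ω₂ η₁ η₂ 0 0 = 0 := congrFun (congrFun heq₂ _) _
  have f01 : K2 γ₀ γ₁ γ₂ κ ω₂ η₁ η₂ 0 1 = 0 := congrFun (congrFun heq₂ _) _
  have f10 : K2 γ₀ γ₁ γ₂ κ ω₂ η₁ η₂ 1 0 = 0 := congrFun (congrFun heq₂ _) _
  have f11 : K2 γ₀ γ₁ γ₂ κ ω₂ η₁ η₂ 1 1 = 0 := congrFun (congrFun heq₂ _) _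
  simp [K1, K2, σm, σp, Pp, Pm, σz, Matrix.mul_apply, Fin.sum_univ_succ,
    Matrix.vecMul, Matrix.vecHead, Matrix.vecTail, dotProduct]
    at e00 e01 e10 e11 f00 f01 f10 f11
  rw [Matrix.trace_fin_two, Matrix.trace_fin_two] at htr
  -- off-diagonal entries vanish
  have hb1 : ((γ₀:ℂ)/2 + (γ₁:ℂ)/2 + (γ₀:ℂ)*(κ:ℂ) + Complex.I*(ω₁:ℂ)) * η₁ 0 1 = 0 := by
    linear_combination -e01
  have hzb : ((γ₀:ℂ)/2 + (γ₁:ℂ)/2 + (γ₀:ℂ)*(κ:ℂ) + Complex.I*(ω₁:ℂ)) ≠ 0 := by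
    intro h
    have h' := congrArg Complex.re h
    simp [Complex.add_re, Complex.div_re, Complex.mul_re] at h'
    nlinarith
  have hb : η₁ 0 1 = 0 := (mul_eq_zero.mp hb1).resolve_left hzb
  have hc1 : ((γ₀:ℂ)/2 + (γ₁:ℂ)/2 + (γ₀:ℂ)*(κ:ℂ) - Complex.I*(ω₁:ℂ)) * η₁ 1 0 = 0 := by
    linear_combination -e10
  have hzc : ((γ₀:ℂ)/2 + (γ₁:ℂ)/2 + (γ₀:ℂ)*(κ:ℂ) - Complex.I*(ω₁:ℂ)) ≠ 0 := by
    intro h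
    have h' := congrArg Complex.re h
    simp [Complex.add_re, Complex.sub_re, Complex.div_re, Complex.mul_re] at h'
    nlinarith
  have hc : η₁ 1 0 = 0 := (mul_eq_zero.mp hc1).resolve_left hzc
  have hf1 : ((γ₀:ℂ)/2 + (γ₂:ℂ)/2 + Complex.I*(ω₂:ℂ)) * η₂ 0 1 = 0 := by
    linear_combination -f01 + ((γ₀:ℂ)*(κ:ℂ)) * hb
  have hzf : ((γ₀:ℂ)/2 + (γ₂:ℂ)/2 + Complex.I*(ω₂:ℂ)) ≠ 0 := by
    intro h
    have h' := congrArg Complex.re h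
    simp [Complex.add_re, Complex.div_re, Complex.mul_re] at h'
    nlinarith
  have hf : η₂ 0 1 = 0 := (mul_eq_zero.mp hf1).resolve_left hzf
  have hg1 : ((γ₀:ℂ)/2 + (γ₂:ℂ)/2 - Complex.I*(ω₂:ℂ)) * η₂ 1 0 = 0 := by
    linear_combination -f10 + ((γ₀:ℂ)*(κ:ℂ)) * hc
  have hzg : ((γ₀:ℂ)/2 + (γ₂:ℂ)/2 - Complex.I*(ω₂:ℂ)) ≠ 0 := by
    intro h
    have h' := congrArg Complex.re h
    simp [Complex.add_re, Complex.sub_re, Complex.div_re, Complex.mul_re] at h'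
    nlinarith
  have hg : η₂ 1 0 = 0 := (mul_eq_zero.mp hg1).resolve_left hzg
  -- diagonal relations
  have ha : η₁ 0 0 = (κ:ℂ) * η₁ 1 1 :=
    mul_left_cancel₀ hγ₀' (by linear_combination e11)
  have he : η₂ 0 0 = (κ:ℂ) * η₁ 0 0 :=
    mul_left_cancel₀ hγ₀' (by linear_combination -f00)
  have hh : (γ₂:ℂ) * η₂ 1 1 = ((γ₀:ℂ) + (γ₁:ℂ) + (γ₀:ℂ)*(κ:ℂ)) * η₁ 0 0 := by
    linear_combination e00
  set Dr : ℝ := γ₂ + κ * (γ₀ + γ₁ + γ₂) + κ ^ 2 * (γ₀ + γ₂) with hDrdef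
  have hDr : 0 < Dr := by positivity
  have hDc : (Dr:ℂ) ≠ 0 := by exact_mod_cast hDr.ne'
  have hDr' : Dr ≠ 0 := hDr.ne'
  have hd : η₁ 1 1 * (Dr:ℂ) = (γ₂:ℂ) := by
    push_cast [hDrdef]
    linear_combination (γ₂:ℂ)*htr
      - ((γ₂:ℂ) + (γ₂:ℂ)*(κ:ℂ) + (γ₀:ℂ) + (γ₁:ℂ) + (γ₀:ℂ)*(κ:ℂ))*ha
      - (γ₂:ℂ)*he - hh
  -- real identities for the target values
  have h1κ : (1:ℝ) + κ ≠ 0 := by positivity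
  have hden2 : γ₁ + γ₀ * (1 + κ) ≠ 0 := by positivity
  have hden3 : γ₁ + γ₀ * (1 + κ) + γ₂ * κ ≠ 0 := by positivity
  have r1 : peq γ₀ γ₁ γ₂ κ * z1p κ = γ₂ * κ / Dr := by
    unfold peq z1p
    rw [hDrdef]
    field_simp
  have r2 : peq γ₀ γ₁ γ₂ κ * (1 - z1p κ) = γ₂ / Dr := by
    unfold peq z1p
    rw [hDrdef]
    field_simp
    ring
  have r3 : (1 - peq γ₀ γ₁ γ₂ κ) * z2p γ₀ γ₁ γ₂ κ = γ₂ * κ ^ 2 / Dr := by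
    unfold peq z2p κ₂
    rw [hDrdef]
    field_simp
    ring
  have r4 : (1 - peq γ₀ γ₁ γ₂ κ) * (1 - z2p γ₀ γ₁ γ₂ κ)
      = κ * (γ₀ + γ₁ + γ₀ * κ) / Dr := by
    unfold peq z2p κ₂
    rw [hDrdef]
    field_simp
    ring
  constructor
  · ext i j
    fin_cases i <;> fin_cases j <;>
      simp [η1eq, Pp, Pm, hb, hc]
    · have r' := congrArg Complex.ofReal r1
      push_cast at r'
      rw [r', eq_div_iff hDc]
      linear_combination (Dr:ℂ) * ha + (κ:ℂ) * hd
    · have r' := congrArg Complex.ofReal r2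
      push_cast at r'
      rw [r', eq_div_iff hDc]
      linear_combination hd
  · ext i j
    fin_cases i <;> fin_cases j <;>
      simp [η2eq, Pp, Pm, hf, hg]
    · have r' := congrArg Complex.ofReal r3
      push_cast at r'
      rw [r', eq_div_iff hDc]
      linear_combination (Dr:ℂ) * he + (κ:ℂ) * (Dr:ℂ) * ha + (κ:ℂ)^2 * hd
    · have r' := congrArg Complex.ofReal r4
      push_cast at r'
      rw [r', eq_div_iff hDc]
      apply mul_left_cancel₀ hγ₂'
      linear_combination (Dr:ℂ) * hh
        + ((γ₀:ℂ) + (γ₁:ℂ) + (γ₀:ℂ)*(κ:ℂ)) * ((Dr:ℂ) * ha + (κ:ℂ) * hd)
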